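/- With μ, i, the blocks B_1, …, B_i, the block sizes l_j, and the counting function c_n as in the context, assume moreover that ∑_j l_j < μ. Then there exists a polynomial P ∈ ℚ[X] of degree exactly μ − 1 such that c_n = P(n) for every natural number n ≥ 0. (This is the combinatorial content of Corollary 3.13 of the paper, showing the Hilbert function of each summand N^{(v̄,l̄)} agrees with a polynomial for all n, and of the degree count in Theorem 3.5.) -/

import Mathlib

open Finset Polynomial

private lemma sum_multichoose_aux (r n : ℕ) :
    ∑ k ∈ Finset.range (n + 1), Nat.multichoose r k = Nat.multichoose (r + 1) n := by
  induction n with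
  | zero => simp
  | succ n ih =>
    rw [Finset.sum_range_succ, ih, Nat.multichoose_succ_succ]
    exact Nat.add_comm _ _

private lemma card_piAntidiag_aux {ι : Type*} [DecidableEq ι] (s : Finset ι) :
    ∀ n : ℕ, (Finset.piAntidiag s n).card = Nat.multichoose s.card n := by
  induction s using Finset.cons_induction with
  | empty =>
    intro n
    cases n with
    | zero => simp
    | succ n =>
      simp [Finset.piAntidiag_empty_of_ne_zero (Nat.succ_ne_zero n),
        Nat.multichoose_zero_succ]
  | cons i s hi ih =>
    intro n
    rw [Finset.piAntidiag_cons hi, Finset.card_disjiUnion]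
    simp only [Finset.card_map, ih]
    calc ∑ p ∈ Finset.HasAntidiagonal.antidiagonal n, Nat.multichoose s.card p.2
        = ∑ k ∈ Finset.range (n + 1), Nat.multichoose s.card (n - k) :=
          Finset.Nat.sum_antidiagonal_eq_sum_range_succ
            (fun _ y => Nat.multichoose s.card y) n
      _ = ∑ k ∈ Finset.range (n + 1), Nat.multichoose s.card k := by
          simpa using Finset.sum_range_reflect
            (fun k => Nat.multichoose s.card k) (n + 1)
      _ = Nat.multichoose (s.card + 1) n := sum_multichoose_aux _ _
      _ = Nat.multichoose (Finset.cons i s hi).card n := by rw [Finset.card_cons]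

private lemma multichoose_eq_choose_aux (m n : ℕ) (hm : 1 ≤ m) :
    Nat.multichoose m n = (n + (m - 1)).choose (m - 1) := by
  obtain ⟨k, rfl⟩ : ∃ k, m = k + 1 := ⟨m - 1, by omega⟩
  simp only [Nat.add_sub_cancel]
  rw [Nat.multichoose_eq]
  have h : k + 1 + n - 1 = n + k := by omega
  rw [h, ← Nat.choose_symm (Nat.le_add_left k n)]
  congr 1
  omega

noncomputable def qaux (k : ℕ) : Polynomial ℚ :=
  Polynomial.C ((k.factorial : ℚ))⁻¹ *
    (ascPochhammer ℚ k).comp (Polynomial.X + Polynomial.C 1)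

private lemma qaux_degree (k : ℕ) : (qaux k).degree = (k : WithBot ℕ) := by
  have hm : ((ascPochhammer ℚ k).comp (X + C 1)).Monic :=
    (monic_ascPochhammer ℚ k).comp_X_add_C 1
  have hdeg : ((ascPochhammer ℚ k).comp (X + C 1)).natDegree = k := by
    rw [Polynomial.natDegree_comp, ascPochhammer_natDegree, Polynomial.natDegree_X_add_C,
      mul_one]
  have hc : ((k.factorial : ℚ))⁻¹ ≠ 0 :=
    inv_ne_zero (Nat.cast_ne_zero.2 k.factorial_ne_zero)
  rw [qaux, Polynomial.degree_C_mul hc, Polynomial.degree_eq_natDegree hm.ne_zero, hdeg]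

private lemma qaux_eval (k n : ℕ) : (qaux k).eval (n : ℚ) = ((n + k).choose k : ℚ) := by
  rw [qaux, eval_mul, eval_C, eval_comp, eval_add, eval_X, eval_C]
  have h1 : (ascPochhammer ℚ k).eval ((n : ℚ) + 1) = (((n + 1).ascFactorial k : ℕ) : ℚ) := by
    have h2 := ascPochhammer_eval_cast (S := ℚ) k (n + 1)
    rw [ascPochhammer_nat_eq_ascFactorial] at h2
    push_cast at h2 ⊢
    exact h2.symm
  rw [h1, Nat.ascFactorial_eq_factorial_mul_choose]
  push_cast
  rw [← mul_assoc, inv_mul_cancel₀ (Nat.cast_ne_zero.2 k.factorial_ne_zero), one_mul]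

/-- With pairwise disjoint nonempty blocks `B_1, …, B_i ⊆ Fin μ` of sizes `l_j`
satisfying `∑_j l_j < μ`, and `c n` the number of `a : Fin μ → ℕ` with `∑ a = n` hitting each
block positively, there is a polynomial `P ∈ ℚ[X]` of degree exactly `μ − 1` with
`c n = P(n)` for every `n ≥ 0`. -/
theorem stmt_7 (μ : ℕ) (hμ : 1 ≤ μ) (i : ℕ) (B : Fin i → Finset (Fin μ))
    (hB : ∀ j, (B j).Nonempty)
    (hdisj : ∀ j j', j ≠ j' → Disjoint (B j) (B j'))
    (hsum : (∑ j, (B j).card) < μ)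
    (c : ℕ → ℕ)
    (hc : ∀ n, c n =
      Nat.card {a : Fin μ → ℕ // (∑ k, a k) = n ∧ ∀ j, ∃ k ∈ B j, 0 < a k}) :
    ∃ P : Polynomial ℚ, P.degree = ((μ - 1 : ℕ) : WithBot ℕ) ∧
      ∀ n : ℕ, (c n : ℚ) = P.eval (n : ℚ) := by
  classical
  set r : Finset (Fin i) → ℕ := fun T => ((T.biUnion B)ᶜ : Finset (Fin μ)).card with hr
  have hrcard : ∀ T : Finset (Fin i), r T = μ - (T.biUnion B).card := by
    intro T
    simp [hr, Finset.card_compl]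
  have hrle : ∀ T : Finset (Fin i), 1 ≤ r T := by
    intro T
    have h1 : (T.biUnion B).card ≤ ∑ j ∈ T, (B j).card := Finset.card_biUnion_le
    have h2 : ∑ j ∈ T, (B j).card ≤ ∑ j, (B j).card :=
      Finset.sum_le_sum_of_subset (Finset.subset_univ _)
    have h3 : (T.biUnion B).card < μ := lt_of_le_of_lt (h1.trans h2) hsum
    rw [hrcard]
    omega
  have hrempty : r ∅ = μ := by simp [hr]
  have hrlt : ∀ T : Finset (Fin i), T ≠ ∅ → r T ≤ μ - 1 := by
    intro T hT
    obtain ⟨j, hj⟩ := Finset.nonempty_iff_ne_empty.2 hT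
    obtain ⟨k, hk⟩ := hB j
    have hmem : k ∈ T.biUnion B := Finset.mem_biUnion.2 ⟨j, hj, hk⟩
    have h1 : 1 ≤ (T.biUnion B).card := Finset.card_pos.2 ⟨k, hmem⟩
    rw [hrcard]
    omega
  set P : Polynomial ℚ :=
    ∑ T ∈ (Finset.univ : Finset (Fin i)).powerset,
      ((-1 : ℚ) ^ T.card) • qaux (r T - 1) with hP
  refine ⟨P, ?_, ?_⟩
  · -- degree
    have hmem : (∅ : Finset (Fin i)) ∈ (Finset.univ : Finset (Fin i)).powerset := by simp
    rw [hP, ← Finset.add_sum_erase _ _ hmem]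
    have h0 : ((-1 : ℚ) ^ (∅ : Finset (Fin i)).card) • qaux (r ∅ - 1) = qaux (μ - 1) := by
      simp [hrempty]
    rw [h0]
    have hq : (qaux (μ - 1)).degree = ((μ - 1 : ℕ) : WithBot ℕ) := qaux_degree _
    have hrest :
        (∑ T ∈ ((Finset.univ : Finset (Fin i)).powerset.erase ∅),
          ((-1 : ℚ) ^ T.card) • qaux (r T - 1)).degree < ((μ - 1 : ℕ) : WithBot ℕ) := by
      refine lt_of_le_of_lt (Polynomial.degree_sum_le _ _) ?_
      rw [Finset.sup_lt_iff (by exact WithBot.bot_lt_coe _)]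
      intro T hT
      have hTne : T ≠ ∅ := (Finset.mem_erase.1 hT).1
      refine lt_of_le_of_lt (Polynomial.degree_smul_le _ _) ?_
      rw [qaux_degree]
      have h1 := hrlt T hTne
      have h2 := hrle T
      exact_mod_cast WithBot.coe_lt_coe.2 (by omega)
    calc (qaux (μ - 1) + _).degree = (qaux (μ - 1)).degree :=
          Polynomial.degree_add_eq_left_of_degree_lt (by rw [hq]; exact hrest)
      _ = ((μ - 1 : ℕ) : WithBot ℕ) := hq
  · -- evaluation
    intro n
    have hcard : c n = ((Finset.Nat.antidiagonalTuple μ n).filter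
        (fun a => ∀ j, ∃ k ∈ B j, 0 < a k)).card := by
      rw [hc, ← Nat.card_eq_finsetCard]
      refine Nat.card_congr (Equiv.subtypeEquivRight ?_)
      intro a
      simp [Finset.Nat.mem_antidiagonalTuple]
    rw [hcard]
    set S := Finset.Nat.antidiagonalTuple μ n with hS
    have key : ((S.filter (fun a => ∀ j, ∃ k ∈ B j, 0 < a k)).card : ℚ)
        = ∑ T ∈ (Finset.univ : Finset (Fin i)).powerset,
            ((-1 : ℚ) ^ T.card) *
              ((S.filter (fun a => ∀ j ∈ T, ∀ k ∈ B j, a k = 0)).card : ℚ) := by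
      rw [← Finset.sum_boole]
      have step : ∀ a : Fin μ → ℕ,
          (if ∀ j, ∃ k ∈ B j, 0 < a k then (1 : ℚ) else 0)
            = ∑ T ∈ (Finset.univ : Finset (Fin i)).powerset,
                ((-1 : ℚ) ^ T.card) *
                  (if ∀ j ∈ T, ∀ k ∈ B j, a k = 0 then (1 : ℚ) else 0) := by
        intro a
        have hprod : (if ∀ j, ∃ k ∈ B j, 0 < a k then (1 : ℚ) else 0)
            = ∏ j : Fin i,
                ((-(if ∀ k ∈ B j, a k = 0 then (1 : ℚ) else 0)) + 1) := by
          have heq : ∀ j : Fin i,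
              ((-(if ∀ k ∈ B j, a k = 0 then (1 : ℚ) else 0)) + 1)
                = (if ∃ k ∈ B j, 0 < a k then (1 : ℚ) else 0) := by
            intro j
            by_cases h : ∀ k ∈ B j, a k = 0
            · rw [if_pos h, if_neg]
              · ring
              · rintro ⟨k, hk, hpos⟩
                exact Nat.pos_iff_ne_zero.mp hpos (h k hk)
            · rw [if_neg h, if_pos]
              · ring
              · push_neg at h
                obtain ⟨k, hk, hne⟩ := h
                exact ⟨k, hk, Nat.pos_of_ne_zero hne⟩
          have hpc : (∏ j : Fin i,
              ((-(if ∀ k ∈ B j, a k = 0 then (1 : ℚ) else 0)) + 1))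
                = ∏ j : Fin i, (if ∃ k ∈ B j, 0 < a k then (1 : ℚ) else 0) :=
            Finset.prod_congr rfl (fun j _ => heq j)
          rw [hpc, Finset.prod_boole]
          simp
        rw [hprod, Finset.prod_add]
        refine Finset.sum_congr rfl ?_
        intro T _
        rw [Finset.prod_const_one, mul_one]
        have hneg : (∏ j ∈ T, (-(if ∀ k ∈ B j, a k = 0 then (1 : ℚ) else 0)))
            = ((-1 : ℚ) ^ T.card) *
                ∏ j ∈ T, (if ∀ k ∈ B j, a k = 0 then (1 : ℚ) else 0) := by
          rw [← Finset.prod_const (-1 : ℚ), ← Finset.prod_mul_distrib]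
          exact Finset.prod_congr rfl (fun j _ => by ring)
        rw [hneg, Finset.prod_boole]
        congr 1
        first
        | rfl
        | simp
        | exact if_congr Iff.rfl rfl rfl
      calc (∑ a ∈ S, if ∀ j, ∃ k ∈ B j, 0 < a k then (1 : ℚ) else 0)
          = ∑ a ∈ S, ∑ T ∈ (Finset.univ : Finset (Fin i)).powerset,
              ((-1 : ℚ) ^ T.card) *
                (if ∀ j ∈ T, ∀ k ∈ B j, a k = 0 then (1 : ℚ) else 0) :=
            Finset.sum_congr rfl (fun a _ => step a)
        _ = ∑ T ∈ (Finset.univ : Finset (Fin i)).powerset,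
              ((-1 : ℚ) ^ T.card) *
                ∑ a ∈ S, (if ∀ j ∈ T, ∀ k ∈ B j, a k = 0 then (1 : ℚ) else 0) := by
            rw [Finset.sum_comm]
            exact Finset.sum_congr rfl (fun T _ => by rw [Finset.mul_sum])
        _ = _ := by
            refine Finset.sum_congr rfl (fun T _ => ?_)
            rw [Finset.sum_boole]
    rw [key, hP, Polynomial.eval_finset_sum]
    refine Finset.sum_congr rfl ?_
    intro T _
    rw [Polynomial.eval_smul, smul_eq_mul]
    congr 1
    have hset : (S.filter (fun a => ∀ j ∈ T, ∀ k ∈ B j, a k = 0))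
        = Finset.piAntidiag ((T.biUnion B)ᶜ) n := by
      ext a
      rw [Finset.mem_filter, Finset.mem_piAntidiag]
      have hmemS : a ∈ S ↔ ∑ k, a k = n := Finset.Nat.mem_antidiagonalTuple
      rw [hmemS]
      constructor
      · rintro ⟨hsum', hz⟩
        have h0 : ∀ k ∈ T.biUnion B, a k = 0 := fun k hk => by
          obtain ⟨j, hj, hkj⟩ := Finset.mem_biUnion.1 hk
          exact hz j hj k hkj
        constructor
        · rw [← hsum']
          exact Finset.sum_subset (Finset.subset_univ _)
            (fun x _ hx => h0 x (by simpa using hx))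
        · intro k hk
          rw [Finset.mem_compl]
          intro hkD
          exact hk (h0 k hkD)
      · rintro ⟨hsum', hz⟩
        have h0 : ∀ k ∈ T.biUnion B, a k = 0 := by
          intro k hk
          by_contra h
          exact Finset.mem_compl.1 (hz k h) hk
        refine ⟨?_, fun j hj k hk => h0 k (Finset.mem_biUnion.2 ⟨j, hj, hk⟩)⟩
        rw [← hsum']
        exact (Finset.sum_subset (Finset.subset_univ _)
          (fun x _ hx => h0 x (by simpa using hx))).symm
    have hrT : r T = ((T.biUnion B)ᶜ : Finset (Fin μ)).card := by rw [hr]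
    rw [hset, card_piAntidiag_aux, qaux_eval, ← hrT,
      multichoose_eq_choose_aux _ n (hrle T)]
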